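/- Entanglement shared between the two decoders does not increase the classical capacity region of a quantum broadcast channel: the capacity region for transmission of classical messages with degraded message sets over N_{A→B₁B₂}, when Receiver 1 and Receiver 2 share an arbitrary pure entangled state Ψ_{S_{B₁}S_{B₂}} and decode by POVMs on B₁ⁿS_{B₁} and B₂ⁿS_{B₂} respectively, equals the classical capacity region of the same channel without any shared entanglement between the decoders. -/

import Mathlib

open scoped BigOperators ComplexOrder
open Matrix Kronecker Filter

noncomputable section

namespace QBC

/-- A density operator: positive semidefinite with unit trace. -/
def IsDensity {α : Type*} [Fintype α] (ρ : Matrix α α ℂ) : Prop :=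
  ρ.PosSemidef ∧ ρ.trace = 1

/-- The von Neumann entropy (in bits) of a matrix, via its eigenvalues. -/
def vnEntropy {α : Type*} [Fintype α] [DecidableEq α] (ρ : Matrix α α ℂ) : ℝ :=
  if h : ρ.IsHermitian then -∑ i, h.eigenvalues i * Real.logb 2 (h.eigenvalues i) else 0

/-- Partial trace over the second tensor factor. -/
def ptr₂ {α β : Type*} [Fintype β] (ρ : Matrix (α × β) (α × β) ℂ) : Matrix α α ℂ :=
  Matrix.of fun i j => ∑ k : β, ρ (i, k) (j, k)

/-- Partial trace over the first tensor factor. -/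
def ptr₁ {α β : Type*} [Fintype α] (ρ : Matrix (α × β) (α × β) ℂ) : Matrix β β ℂ :=
  Matrix.of fun i j => ∑ k : α, ρ (k, i) (k, j)

/-- The rank-one density operator associated with a (unit) vector. -/
def pureState {α : Type*} (ψ : α → ℂ) : Matrix α α ℂ :=
  Matrix.of fun i j => ψ i * star (ψ j)

/-- The Choi matrix of a linear map on matrices. -/
def choi {α β : Type*} [Fintype α] [DecidableEq α]
    (Φ : Matrix α α ℂ →ₗ[ℂ] Matrix β β ℂ) : Matrix (α × β) (α × β) ℂ :=
  Matrix.of fun p q => Φ (Matrix.single p.1 q.1 1) p.2 q.2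

/-- A quantum channel: completely positive (positive semidefinite Choi matrix, by Choi's
theorem) and trace preserving. -/
def IsCPTP {α β : Type*} [Fintype α] [DecidableEq α] [Fintype β]
    (Φ : Matrix α α ℂ →ₗ[ℂ] Matrix β β ℂ) : Prop :=
  (choi Φ).PosSemidef ∧ ∀ ρ, (Φ ρ).trace = ρ.trace

/-- The tensor product of two linear maps on matrices. -/
def lmTensor {α β γ δ : Type*} [Fintype α] [DecidableEq α] [Fintype γ] [DecidableEq γ]
    (Φ : Matrix α α ℂ →ₗ[ℂ] Matrix β β ℂ) (Ψ : Matrix γ γ ℂ →ₗ[ℂ] Matrix δ δ ℂ) :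
    Matrix (α × γ) (α × γ) ℂ →ₗ[ℂ] Matrix (β × δ) (β × δ) ℂ where
  toFun ρ := Matrix.of fun i j => ∑ p : α, ∑ q : α, ∑ r : γ, ∑ s : γ,
    ρ (p, r) (q, s) * (Φ (Matrix.single p q 1) i.1 j.1 *
      Ψ (Matrix.single r s 1) i.2 j.2)
  map_add' ρ σ := by
    ext i j
    simp [Matrix.add_apply, add_mul, Finset.sum_add_distrib]
  map_smul' c ρ := by
    ext i j
    simp [Matrix.smul_apply, smul_eq_mul, Finset.mul_sum, mul_assoc]

/-- The `n`-fold tensor power of a linear map on matrices. -/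
def tensorPow {α β : Type*} [Fintype α] [DecidableEq α] [Fintype β]
    (Φ : Matrix α α ℂ →ₗ[ℂ] Matrix β β ℂ) (n : ℕ) :
    Matrix (Fin n → α) (Fin n → α) ℂ →ₗ[ℂ] Matrix (Fin n → β) (Fin n → β) ℂ where
  toFun ρ := Matrix.of fun i j => ∑ p : Fin n → α, ∑ q : Fin n → α,
    ρ p q * ∏ t, Φ (Matrix.single (p t) (q t) 1) (i t) (j t)
  map_add' ρ σ := by
    ext i j
    simp [Matrix.add_apply, add_mul, Finset.sum_add_distrib]
  map_smul' c ρ := by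
    ext i j
    simp [Matrix.smul_apply, smul_eq_mul, Finset.mul_sum, mul_assoc]

/-- `n` uses of a broadcast channel, with the output arranged as `B₁ⁿ × B₂ⁿ`. -/
def prodChannel {α β₁ β₂ : Type*} [Fintype α] [DecidableEq α] [Fintype β₁] [Fintype β₂]
    (N : Matrix α α ℂ →ₗ[ℂ] Matrix (β₁ × β₂) (β₁ × β₂) ℂ) (n : ℕ) :
    Matrix (Fin n → α) (Fin n → α) ℂ →ₗ[ℂ]
      Matrix ((Fin n → β₁) × (Fin n → β₂)) ((Fin n → β₁) × (Fin n → β₂)) ℂ :=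
  (Matrix.reindexLinearEquiv ℂ ℂ (Equiv.arrowProdEquivProdArrow (Fin n) (fun _ => β₁) (fun _ => β₂))
    (Equiv.arrowProdEquivProdArrow (Fin n) (fun _ => β₁) (fun _ => β₂))).toLinearMap ∘ₗ tensorPow N n

section cq

variable {X₀ X₁ B₁ B₂ : Type*} [Fintype X₀] [DecidableEq X₀] [Fintype X₁] [DecidableEq X₁]
  [Fintype B₁] [DecidableEq B₁] [Fintype B₂] [DecidableEq B₂]

/-- The classical–quantum state `Σ p(x₀,x₁) |x₀⟩⟨x₀| ⊗ |x₁⟩⟨x₁| ⊗ ρ^{x₀,x₁}`. -/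
def cqState (p : X₀ → X₁ → ℝ) (ρ : X₀ → X₁ → Matrix (B₁ × B₂) (B₁ × B₂) ℂ) :
    Matrix ((X₀ × X₁) × (B₁ × B₂)) ((X₀ × X₁) × (B₁ × B₂)) ℂ :=
  Matrix.of fun a b => if a.1 = b.1 then (p a.1.1 a.1.2 : ℂ) * ρ a.1.1 a.1.2 a.2 b.2 else 0

variable (ρ : Matrix ((X₀ × X₁) × (B₁ × B₂)) ((X₀ × X₁) × (B₁ × B₂)) ℂ)

def redX₀ : Matrix X₀ X₀ ℂ := ptr₂ (ptr₂ ρ)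

def redX₀X₁ : Matrix (X₀ × X₁) (X₀ × X₁) ℂ := ptr₂ ρ

def redB₁ : Matrix B₁ B₁ ℂ := ptr₂ (ptr₁ ρ)

def redB₂ : Matrix B₂ B₂ ℂ := ptr₁ (ptr₁ ρ)

def redX₀B₂ : Matrix (X₀ × B₂) (X₀ × B₂) ℂ :=
  Matrix.of fun i j => ∑ u : X₁, ∑ k : B₁, ρ ((i.1, u), (k, i.2)) ((j.1, u), (k, j.2))

def redX₀B₁ : Matrix (X₀ × B₁) (X₀ × B₁) ℂ :=
  Matrix.of fun i j => ∑ u : X₁, ∑ l : B₂, ρ ((i.1, u), (i.2, l)) ((j.1, u), (j.2, l))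

def redX₁B₂ : Matrix (X₁ × B₂) (X₁ × B₂) ℂ :=
  Matrix.of fun i j => ∑ x : X₀, ∑ k : B₁, ρ ((x, i.1), (k, i.2)) ((x, j.1), (k, j.2))

def redX₀X₁B₁ : Matrix ((X₀ × X₁) × B₁) ((X₀ × X₁) × B₁) ℂ :=
  Matrix.of fun i j => ∑ l : B₂, ρ (i.1, (i.2, l)) (j.1, (j.2, l))

/-- `I(X₀;B₂)_ρ = H(X₀) + H(B₂) − H(X₀B₂)`. -/
def IX₀B₂ : ℝ := vnEntropy (redX₀ ρ) + vnEntropy (redB₂ ρ) - vnEntropy (redX₀B₂ ρ)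

/-- `I(X₁;B₁|X₀)_ρ = H(X₀X₁) + H(X₀B₁) − H(X₀) − H(X₀X₁B₁)`. -/
def IX₁B₁X₀ : ℝ :=
  vnEntropy (redX₀X₁ ρ) + vnEntropy (redX₀B₁ ρ) - vnEntropy (redX₀ ρ) -
    vnEntropy (redX₀X₁B₁ ρ)

/-- `I(X₀X₁;B₁)_ρ = H(X₀X₁) + H(B₁) − H(X₀X₁B₁)`. -/
def IX₀X₁B₁ : ℝ := vnEntropy (redX₀X₁ ρ) + vnEntropy (redB₁ ρ) - vnEntropy (redX₀X₁B₁ ρ)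

end cq

/-- The single-letter rate region `R_Cl(N)` with conferencing capacity `C₁₂`. -/
def RCl {ι β₁ β₂ : Type*} [Fintype ι] [DecidableEq ι] [Fintype β₁] [DecidableEq β₁]
    [Fintype β₂] [DecidableEq β₂]
    (N : Matrix ι ι ℂ →ₗ[ℂ] Matrix (β₁ × β₂) (β₁ × β₂) ℂ) (C₁₂ : ℝ) : Set (ℝ × ℝ) :=
  {r | ∃ (a b : ℕ) (p : Fin a → Fin b → ℝ) (θ : Fin a → Fin b → Matrix ι ι ℂ),
    (∀ x₀ x₁, 0 ≤ p x₀ x₁) ∧ (∑ x₀, ∑ x₁, p x₀ x₁) = 1 ∧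
    (∀ x₀ x₁, IsDensity (θ x₀ x₁)) ∧
    r.1 ≤ IX₀B₂ (cqState p fun x₀ x₁ => N (θ x₀ x₁)) + C₁₂ ∧
    r.2 ≤ IX₁B₁X₀ (cqState p fun x₀ x₁ => N (θ x₀ x₁)) ∧
    r.1 + r.2 ≤ IX₀X₁B₁ (cqState p fun x₀ x₁ => N (θ x₀ x₁))}

/-- A classical code with degraded message sets and conferencing:
`M₀` common messages, `M₁` private messages for User 1, `K` conference messages. -/
structure CCode (ι β₁ β₂ : Type*) [Fintype ι] [DecidableEq ι] [Fintype β₁] [DecidableEq β₁]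
    [Fintype β₂] [DecidableEq β₂] (n M₀ M₁ K : ℕ) where
  enc : Fin M₀ → Fin M₁ → Matrix (Fin n → ι) (Fin n → ι) ℂ
  enc_density : ∀ m₀ m₁, IsDensity (enc m₀ m₁)
  dec1 : Fin M₀ → Fin M₁ → Fin K → Matrix (Fin n → β₁) (Fin n → β₁) ℂ
  dec1_pos : ∀ m₀ m₁ g, (dec1 m₀ m₁ g).PosSemidef
  dec1_sum : (∑ m₀, ∑ m₁, ∑ g, dec1 m₀ m₁ g) = 1
  dec2 : Fin K → Fin M₀ → Matrix (Fin n → β₂) (Fin n → β₂) ℂ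
  dec2_pos : ∀ g m₀, (dec2 g m₀).PosSemidef
  dec2_sum : ∀ g, (∑ m₀, dec2 g m₀) = 1

/-- The probability of error of a classical conferencing code, given the message pair. -/
def CCode.err {ι β₁ β₂ : Type*} [Fintype ι] [DecidableEq ι] [Fintype β₁] [DecidableEq β₁]
    [Fintype β₂] [DecidableEq β₂] {n M₀ M₁ K : ℕ}
    (N : Matrix ι ι ℂ →ₗ[ℂ] Matrix (β₁ × β₂) (β₁ × β₂) ℂ)
    (c : CCode ι β₁ β₂ n M₀ M₁ K) (m₀ : Fin M₀) (m₁ : Fin M₁) : ℝ :=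
  1 - (∑ g, ((c.dec1 m₀ m₁ g ⊗ₖ c.dec2 g m₀) * prodChannel N n (c.enc m₀ m₁)).trace).re

/-- Achievability of a classical rate pair with conferencing. -/
def achievable {ι β₁ β₂ : Type*} [Fintype ι] [DecidableEq ι] [Fintype β₁] [DecidableEq β₁]
    [Fintype β₂] [DecidableEq β₂]
    (N : Matrix ι ι ℂ →ₗ[ℂ] Matrix (β₁ × β₂) (β₁ × β₂) ℂ) (C₁₂ : ℝ) (r : ℝ × ℝ) : Prop :=
  ∀ ε : ℝ, 0 < ε → ∃ n₀ : ℕ, ∀ n, n₀ ≤ n →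
    ∃ (M₀ M₁ K : ℕ) (c : CCode ι β₁ β₂ n M₀ M₁ K),
      (2 : ℝ) ^ ((n : ℝ) * r.1) ≤ M₀ ∧ (2 : ℝ) ^ ((n : ℝ) * r.2) ≤ M₁ ∧
      (K : ℝ) ≤ (2 : ℝ) ^ ((n : ℝ) * C₁₂) ∧ ∀ m₀ m₁, CCode.err N c m₀ m₁ ≤ ε

/-- The classical capacity region with conferencing. -/
def capacityRegion {ι β₁ β₂ : Type*} [Fintype ι] [DecidableEq ι] [Fintype β₁] [DecidableEq β₁]
    [Fintype β₂] [DecidableEq β₂]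
    (N : Matrix ι ι ℂ →ₗ[ℂ] Matrix (β₁ × β₂) (β₁ × β₂) ℂ) (C₁₂ : ℝ) : Set (ℝ × ℝ) :=
  {r | achievable N C₁₂ r}


/-- The trace norm `‖A‖₁ = Tr √(AᴴA)`, via the eigenvalues of `AᴴA`. -/
def traceNorm {α : Type*} [Fintype α] [DecidableEq α] (A : Matrix α α ℂ) : ℝ :=
  ∑ i, Real.sqrt ((Matrix.posSemidef_conjTranspose_mul_self A).1.eigenvalues i)

/-- Coherent information `I(A⟩B)_ρ = H(B) − H(AB)` of a bipartite state on `α × β`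
(the first factor is `A`, the second is `B`). -/
def cohInfo {α β : Type*} [Fintype α] [DecidableEq α] [Fintype β] [DecidableEq β]
    (ρ : Matrix (α × β) (α × β) ℂ) : ℝ :=
  vnEntropy (ptr₁ ρ) - vnEntropy ρ

/-- Quantum mutual information `I(A;B)_ρ = H(A) + H(B) − H(AB)`. -/
def mutualInfo {α β : Type*} [Fintype α] [DecidableEq α] [Fintype β] [DecidableEq β]
    (ρ : Matrix (α × β) (α × β) ℂ) : ℝ :=
  vnEntropy (ptr₂ ρ) + vnEntropy (ptr₁ ρ) - vnEntropy ρ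

/-- A quantum code with quantum conferencing: message systems of dimensions `K₁`, `K₂`
and a conference register of dimension `KG` sent noiselessly from Receiver 1 to Receiver 2. -/
structure QCode (ι β₁ β₂ : Type*) [Fintype ι] [DecidableEq ι] [Fintype β₁] [DecidableEq β₁]
    [Fintype β₂] [DecidableEq β₂] (n K₁ K₂ KG : ℕ) where
  F : Matrix (Fin K₁ × Fin K₂) (Fin K₁ × Fin K₂) ℂ →ₗ[ℂ] Matrix (Fin n → ι) (Fin n → ι) ℂ
  F_cptp : IsCPTP F
  D1 : Matrix (Fin n → β₁) (Fin n → β₁) ℂ →ₗ[ℂ] Matrix (Fin K₁ × Fin KG) (Fin K₁ × Fin KG) ℂ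
  D1_cptp : IsCPTP D1
  D2 : Matrix (Fin KG × (Fin n → β₂)) (Fin KG × (Fin n → β₂)) ℂ →ₗ[ℂ] Matrix (Fin K₂) (Fin K₂) ℂ
  D2_cptp : IsCPTP D2

/-- The state recovered by the decoders: apply the encoder, `n` uses of the channel,
Receiver 1's decoder on `B₁ⁿ`, the noiseless conference link, and Receiver 2's decoder. -/
def QCode.output {ι β₁ β₂ : Type*} [Fintype ι] [DecidableEq ι] [Fintype β₁] [DecidableEq β₁]
    [Fintype β₂] [DecidableEq β₂] {n K₁ K₂ KG : ℕ}
    (N : Matrix ι ι ℂ →ₗ[ℂ] Matrix (β₁ × β₂) (β₁ × β₂) ℂ)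
    (c : QCode ι β₁ β₂ n K₁ K₂ KG)
    (ρ : Matrix (Fin K₁ × Fin K₂) (Fin K₁ × Fin K₂) ℂ) :
    Matrix (Fin K₁ × Fin K₂) (Fin K₁ × Fin K₂) ℂ :=
  lmTensor (LinearMap.id : Matrix (Fin K₁) (Fin K₁) ℂ →ₗ[ℂ] Matrix (Fin K₁) (Fin K₁) ℂ) c.D2
    (Matrix.reindex (Equiv.prodAssoc (Fin K₁) (Fin KG) (Fin n → β₂))
      (Equiv.prodAssoc (Fin K₁) (Fin KG) (Fin n → β₂))
      (lmTensor c.D1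
        (LinearMap.id : Matrix (Fin n → β₂) (Fin n → β₂) ℂ →ₗ[ℂ]
          Matrix (Fin n → β₂) (Fin n → β₂) ℂ)
        (prodChannel N n (c.F ρ))))

/-- The code recovers every message state within trace distance `ε`. -/
def QCode.good {ι β₁ β₂ : Type*} [Fintype ι] [DecidableEq ι] [Fintype β₁] [DecidableEq β₁]
    [Fintype β₂] [DecidableEq β₂] {n K₁ K₂ KG : ℕ}
    (N : Matrix ι ι ℂ →ₗ[ℂ] Matrix (β₁ × β₂) (β₁ × β₂) ℂ)
    (c : QCode ι β₁ β₂ n K₁ K₂ KG) (ε : ℝ) : Prop :=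
  ∀ ρ, IsDensity ρ → (1 / 2) * traceNorm (ρ - QCode.output N c ρ) ≤ ε

/-- Achievability of a quantum rate pair with quantum conferencing of capacity `CQ`. -/
def QAchievable {ι β₁ β₂ : Type*} [Fintype ι] [DecidableEq ι] [Fintype β₁] [DecidableEq β₁]
    [Fintype β₂] [DecidableEq β₂]
    (N : Matrix ι ι ℂ →ₗ[ℂ] Matrix (β₁ × β₂) (β₁ × β₂) ℂ) (CQ : ℝ) (q : ℝ × ℝ) : Prop :=
  ∀ ε : ℝ, 0 < ε → ∃ n₀ : ℕ, ∀ n, n₀ ≤ n →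
    ∃ (K₁ K₂ KG : ℕ) (c : QCode ι β₁ β₂ n K₁ K₂ KG),
      (2 : ℝ) ^ ((n : ℝ) * q.1) ≤ K₁ ∧ (2 : ℝ) ^ ((n : ℝ) * q.2) ≤ K₂ ∧
      (KG : ℝ) ≤ (2 : ℝ) ^ ((n : ℝ) * CQ) ∧ QCode.good N c ε

/-- The quantum capacity of the primitive relay channel: the supremum of rates `Q₂`
such that `(0, Q₂)` is achievable. -/
def relayCapacity {ι β₁ β₂ : Type*} [Fintype ι] [DecidableEq ι] [Fintype β₁] [DecidableEq β₁]
    [Fintype β₂] [DecidableEq β₂]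
    (N : Matrix ι ι ℂ →ₗ[ℂ] Matrix (β₁ × β₂) (β₁ × β₂) ℂ) (CQ : ℝ) : ℝ :=
  sSup {q : ℝ | QAchievable N CQ (0, q)}

/-- The entanglement of formation of a bipartite state on `α × β`,
with respect to the bipartition `α | β`. -/
def EF {α β : Type*} [Fintype α] [DecidableEq α] [Fintype β] [DecidableEq β]
    (ρ : Matrix (α × β) (α × β) ℂ) : ℝ :=
  sInf {x : ℝ | ∃ (m : ℕ) (p : Fin m → ℝ) (ψ : Fin m → α × β → ℂ),
    (∀ i, 0 ≤ p i) ∧ (∑ i, p i) = 1 ∧ (∀ i, (∑ v, ‖ψ i v‖ ^ 2) = 1) ∧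
    ρ = ∑ i, (p i : ℂ) • pureState (ψ i) ∧
    x = ∑ i, p i * vnEntropy (ptr₂ (pureState (ψ i)))}


/-- The identity channel. -/
def idChan (α : Type*) : Matrix α α ℂ →ₗ[ℂ] Matrix α α ℂ := LinearMap.id

/-- A classical code with degraded message sets for the broadcast channel, where the two
decoders share a pure entangled state on systems of dimensions `s₁`, `s₂` and decode by
POVMs on `B₁ⁿ S_{B₁}` and `B₂ⁿ S_{B₂}`, respectively. -/
structure EACode (ι β₁ β₂ : Type*) [Fintype ι] [DecidableEq ι] [Fintype β₁] [DecidableEq β₁]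
    [Fintype β₂] [DecidableEq β₂] (n M₀ M₁ s₁ s₂ : ℕ) where
  enc : Fin M₀ → Fin M₁ → Matrix (Fin n → ι) (Fin n → ι) ℂ
  enc_density : ∀ m₀ m₁, IsDensity (enc m₀ m₁)
  ent : Fin s₁ × Fin s₂ → ℂ
  ent_norm : (∑ v, ‖ent v‖ ^ 2) = 1
  dec1 : Fin M₀ → Fin M₁ → Matrix ((Fin n → β₁) × Fin s₁) ((Fin n → β₁) × Fin s₁) ℂ
  dec1_pos : ∀ m₀ m₁, (dec1 m₀ m₁).PosSemidef
  dec1_sum : (∑ m₀, ∑ m₁, dec1 m₀ m₁) = 1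
  dec2 : Fin M₀ → Matrix ((Fin n → β₂) × Fin s₂) ((Fin n → β₂) × Fin s₂) ℂ
  dec2_pos : ∀ m₀, (dec2 m₀).PosSemidef
  dec2_sum : (∑ m₀, dec2 m₀) = 1

/-- The probability of error of a code with entangled decoders, given the message pair. -/
def EACode.err {ι β₁ β₂ : Type*} [Fintype ι] [DecidableEq ι] [Fintype β₁] [DecidableEq β₁]
    [Fintype β₂] [DecidableEq β₂] {n M₀ M₁ s₁ s₂ : ℕ}
    (N : Matrix ι ι ℂ →ₗ[ℂ] Matrix (β₁ × β₂) (β₁ × β₂) ℂ)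
    (c : EACode ι β₁ β₂ n M₀ M₁ s₁ s₂) (m₀ : Fin M₀) (m₁ : Fin M₁) : ℝ :=
  1 - (((c.dec1 m₀ m₁ ⊗ₖ c.dec2 m₀) *
    Matrix.reindex (Equiv.prodProdProdComm (Fin n → β₁) (Fin n → β₂) (Fin s₁) (Fin s₂))
      (Equiv.prodProdProdComm (Fin n → β₁) (Fin n → β₂) (Fin s₁) (Fin s₂))
      (prodChannel N n (c.enc m₀ m₁) ⊗ₖ pureState c.ent)).trace).re

/-- Achievability of a classical rate pair with entangled decoders. -/
def eaAchievable {ι β₁ β₂ : Type*} [Fintype ι] [DecidableEq ι] [Fintype β₁] [DecidableEq β₁]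
    [Fintype β₂] [DecidableEq β₂]
    (N : Matrix ι ι ℂ →ₗ[ℂ] Matrix (β₁ × β₂) (β₁ × β₂) ℂ) (r : ℝ × ℝ) : Prop :=
  ∀ ε : ℝ, 0 < ε → ∃ n₀ : ℕ, ∀ n, n₀ ≤ n →
    ∃ (M₀ M₁ s₁ s₂ : ℕ) (c : EACode ι β₁ β₂ n M₀ M₁ s₁ s₂),
      (2 : ℝ) ^ ((n : ℝ) * r.1) ≤ M₀ ∧ (2 : ℝ) ^ ((n : ℝ) * r.2) ≤ M₁ ∧
      ∀ m₀ m₁, EACode.err N c m₀ m₁ ≤ ε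

/-- Achievability of a classical rate pair without entanglement between the decoders:
the shared systems are trivial (one-dimensional). -/
def plainAchievable {ι β₁ β₂ : Type*} [Fintype ι] [DecidableEq ι] [Fintype β₁]
    [DecidableEq β₁] [Fintype β₂] [DecidableEq β₂]
    (N : Matrix ι ι ℂ →ₗ[ℂ] Matrix (β₁ × β₂) (β₁ × β₂) ℂ) (r : ℝ × ℝ) : Prop :=
  ∀ ε : ℝ, 0 < ε → ∃ n₀ : ℕ, ∀ n, n₀ ≤ n →
    ∃ (M₀ M₁ : ℕ) (c : EACode ι β₁ β₂ n M₀ M₁ 1 1),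
      (2 : ℝ) ^ ((n : ℝ) * r.1) ≤ M₀ ∧ (2 : ℝ) ^ ((n : ℝ) * r.2) ≤ M₁ ∧
      ∀ m₀ m₁, EACode.err N c m₀ m₁ ≤ ε



lemma psd_exists_mul {α : Type*} [Fintype α] [DecidableEq α] {M : Matrix α α ℂ}
    (h : M.PosSemidef) : ∃ B : Matrix α α ℂ, M = Bᴴ * B := by
  open scoped MatrixOrder in
  exact CStarAlgebra.nonneg_iff_eq_star_mul_self.mp h.nonneg

lemma psd_sum {α ι : Type*} [Fintype α] (s : Finset ι) (f : ι → Matrix α α ℂ)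
    (h : ∀ i ∈ s, (f i).PosSemidef) : (∑ i ∈ s, f i).PosSemidef := by
  classical
  induction s using Finset.induction with
  | empty => simpa using Matrix.PosSemidef.zero
  | insert _ _ hx ih =>
    rw [Finset.sum_insert hx]
    exact Matrix.PosSemidef.add (h _ (Finset.mem_insert_self _ _))
      (ih fun i hi => h i (Finset.mem_insert_of_mem hi))

lemma psd_trace_nonneg {α : Type*} [Fintype α] [DecidableEq α] {M : Matrix α α ℂ}
    (hM : M.PosSemidef) : 0 ≤ M.trace := by
  rw [Matrix.trace]
  refine Finset.sum_nonneg fun i _ => ?_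
  have := hM.dotProduct_mulVec_nonneg (Pi.single i 1)
  simpa [dotProduct, Matrix.mulVec, Pi.single_apply, Finset.sum_ite_eq,
    Matrix.diag] using this

lemma trace_mul_psd_nonneg {α : Type*} [Fintype α] [DecidableEq α]
    {A B : Matrix α α ℂ} (hA : A.PosSemidef) (hB : B.PosSemidef) :
    0 ≤ ((A * B).trace).re := by
  obtain ⟨C, hC⟩ := psd_exists_mul hB
  have h1 : (A * B).trace = (C * A * Cᴴ).trace := by
    rw [hC, ← Matrix.mul_assoc, Matrix.trace_mul_cycle]
  have h2 : (C * A * Cᴴ).PosSemidef := hA.mul_mul_conjTranspose_same C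
  have := psd_trace_nonneg h2
  rw [h1]
  exact (Complex.le_def.mp this).1

lemma conjTranspose_kron {l m p q : Type*} (A : Matrix l m ℂ) (B : Matrix p q ℂ) :
    (A ⊗ₖ B)ᴴ = Aᴴ ⊗ₖ Bᴴ := by
  ext i j
  simp [Matrix.conjTranspose_apply, Matrix.kroneckerMap_apply, mul_comm]

lemma psd_kron {α β : Type*} [Fintype α] [Fintype β] [DecidableEq α] [DecidableEq β]
    {A : Matrix α α ℂ} {B : Matrix β β ℂ} (hA : A.PosSemidef) (hB : B.PosSemidef) :
    (A ⊗ₖ B).PosSemidef := by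
  obtain ⟨C, hC⟩ := psd_exists_mul hA
  obtain ⟨D, hD⟩ := psd_exists_mul hB
  rw [hC, hD, Matrix.mul_kronecker_mul, ← conjTranspose_kron]
  exact Matrix.posSemidef_conjTranspose_mul_self _

lemma psd_reindex {α β : Type*} [Fintype α] [Fintype β] {M : Matrix α α ℂ}
    (hM : M.PosSemidef) (e : α ≃ β) : (Matrix.reindex e e M).PosSemidef := by
  rw [Matrix.reindex_apply]
  exact hM.submatrix _


section Kraus

variable {α β : Type*} [Fintype α] [DecidableEq α] [Fintype β] [DecidableEq β]

lemma exists_kraus (N : Matrix α α ℂ →ₗ[ℂ] Matrix β β ℂ) (hN : IsCPTP N) :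
    ∃ K : (α × β) → β → α → ℂ, ∀ p q a b,
      N (Matrix.single p q 1) a b = ∑ k, K k a p * star (K k b q) := by
  obtain ⟨B, hB⟩ := psd_exists_mul hN.1
  refine ⟨fun k b p => star (B k (p, b)), fun p q a b => ?_⟩
  have h : choi N (p, a) (q, b) = N (Matrix.single p q 1) a b := rfl
  rw [← h, hB]
  simp [Matrix.mul_apply, Matrix.conjTranspose_apply]

lemma lmap_apply_eq (N : Matrix α α ℂ →ₗ[ℂ] Matrix β β ℂ) (ρ : Matrix α α ℂ) (a b : β) :
    N ρ a b = ∑ p, ∑ q, ρ p q * N (Matrix.single p q 1) a b := by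
  conv_lhs => rw [Matrix.matrix_eq_sum_single ρ]
  rw [map_sum]
  rw [Matrix.sum_apply]
  refine Finset.sum_congr rfl fun p _ => ?_
  rw [map_sum, Matrix.sum_apply]
  refine Finset.sum_congr rfl fun q _ => ?_
  rw [show Matrix.single p q (ρ p q) = ρ p q • Matrix.single p q 1 by
    rw [Matrix.smul_single, smul_eq_mul, mul_one], _root_.map_smul]
  simp [smul_eq_mul]

lemma trace_stdBasisMatrix (p q : α) :
    (Matrix.single p q (1:ℂ)).trace = if p = q then 1 else 0 := by
  simp only [Matrix.trace, Matrix.diag, Matrix.single, Matrix.of_apply]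
  rcases eq_or_ne p q with rfl | h
  · simp
  · rw [Finset.sum_eq_zero, if_neg h]
    intro i _
    rw [if_neg]
    rintro ⟨rfl, rfl⟩
    exact h rfl

end Kraus

section TPow

variable {α β : Type*} [Fintype α] [DecidableEq α] [Fintype β] [DecidableEq β]

lemma tensorPow_apply (N : Matrix α α ℂ →ₗ[ℂ] Matrix β β ℂ) (n : ℕ)
    (ρ : Matrix (Fin n → α) (Fin n → α) ℂ) (i j : Fin n → β) :
    tensorPow N n ρ i j = ∑ p, ∑ q,
      ρ p q * ∏ t, N (Matrix.single (p t) (q t) 1) (i t) (j t) := rfl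

lemma tensorPow_eq_sum_kraus (N : Matrix α α ℂ →ₗ[ℂ] Matrix β β ℂ) (hN : IsCPTP N)
    (n : ℕ) (ρ : Matrix (Fin n → α) (Fin n → α) ℂ) :
    ∃ L : (Fin n → α × β) → Matrix (Fin n → β) (Fin n → α) ℂ,
      tensorPow N n ρ = ∑ f, L f * ρ * (L f)ᴴ := by
  obtain ⟨K, hK⟩ := exists_kraus N hN
  refine ⟨fun f => Matrix.of fun (a : Fin n → β) (r : Fin n → α) => ∏ t, K (f t) (a t) (r t), ?_⟩
  ext i j
  rw [tensorPow_apply, Matrix.sum_apply]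
  have hprod : ∀ p q : Fin n → α,
      (∏ t, N (Matrix.single (p t) (q t) 1) (i t) (j t))
        = ∑ f : Fin n → α × β,
            (∏ t, K (f t) (i t) (p t)) * star (∏ t, K (f t) (j t) (q t)) := by
    intro p q
    simp_rw [hK]
    rw [Fintype.prod_sum]
    exact Finset.sum_congr rfl fun f _ => by rw [Finset.prod_mul_distrib, star_prod]
  calc (∑ p, ∑ q, ρ p q * ∏ t, N (Matrix.single (p t) (q t) 1) (i t) (j t))
      = ∑ p, ∑ q, ∑ f : Fin n → α × β,
          ρ p q * ((∏ t, K (f t) (i t) (p t)) * star (∏ t, K (f t) (j t) (q t))) := by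
        refine Finset.sum_congr rfl fun p _ => Finset.sum_congr rfl fun q _ => ?_
        rw [hprod, Finset.mul_sum]
    _ = ∑ f : Fin n → α × β, ∑ p, ∑ q,
          ρ p q * ((∏ t, K (f t) (i t) (p t)) * star (∏ t, K (f t) (j t) (q t))) := by
        rw [show (∑ p, ∑ q, ∑ f : Fin n → α × β,
            ρ p q * ((∏ t, K (f t) (i t) (p t)) * star (∏ t, K (f t) (j t) (q t))))
            = ∑ p, ∑ f : Fin n → α × β, ∑ q,
            ρ p q * ((∏ t, K (f t) (i t) (p t)) * star (∏ t, K (f t) (j t) (q t)))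
          from Finset.sum_congr rfl fun p _ => Finset.sum_comm, Finset.sum_comm]
    _ = ∑ f : Fin n → α × β,
          ((Matrix.of fun (a : Fin n → β) (r : Fin n → α) => ∏ t, K (f t) (a t) (r t)) * ρ *
            (Matrix.of fun (a : Fin n → β) (r : Fin n → α) => ∏ t, K (f t) (a t) (r t))ᴴ) i j := by
        refine Finset.sum_congr rfl fun f _ => ?_
        simp only [Matrix.mul_apply, Matrix.conjTranspose_apply, Matrix.of_apply,
          Finset.sum_mul, Finset.mul_sum]
        rw [Finset.sum_comm]
        exact Finset.sum_congr rfl fun p _ => Finset.sum_congr rfl fun q _ => by ring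

lemma tensorPow_psd {N : Matrix α α ℂ →ₗ[ℂ] Matrix β β ℂ} (hN : IsCPTP N)
    {n : ℕ} {ρ : Matrix (Fin n → α) (Fin n → α) ℂ} (hρ : ρ.PosSemidef) :
    (tensorPow N n ρ).PosSemidef := by
  obtain ⟨L, hL⟩ := tensorPow_eq_sum_kraus N hN n ρ
  rw [hL]
  exact psd_sum _ _ fun f _ => hρ.mul_mul_conjTranspose_same (L f)

lemma tensorPow_trace {N : Matrix α α ℂ →ₗ[ℂ] Matrix β β ℂ} (hN : IsCPTP N)
    {n : ℕ} (ρ : Matrix (Fin n → α) (Fin n → α) ℂ) :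
    (tensorPow N n ρ).trace = ρ.trace := by
  have hdiag : ∀ p q : α, (N (Matrix.single p q 1)).trace
      = if p = q then 1 else 0 := by
    intro p q
    rw [hN.2, trace_stdBasisMatrix]
  have key : ∀ p q : Fin n → α,
      (∑ i : Fin n → β, ∏ t, N (Matrix.single (p t) (q t) 1) (i t) (i t))
        = if p = q then 1 else 0 := by
    intro p q
    rw [← Fintype.prod_sum (fun t b => N (Matrix.single (p t) (q t) 1) b b)]
    have : ∀ t, (∑ b, N (Matrix.single (p t) (q t) 1) b b)
        = if p t = q t then 1 else 0 := fun t => hdiag (p t) (q t)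
    rw [Finset.prod_congr rfl fun t _ => this t]
    rcases eq_or_ne p q with rfl | h
    · simp
    · rw [if_neg h]
      obtain ⟨t, ht⟩ : ∃ t, p t ≠ q t := by
        by_contra hc
        push_neg at hc
        exact h (funext hc)
      exact Finset.prod_eq_zero (Finset.mem_univ t) (if_neg ht)
  have : (tensorPow N n ρ).trace
      = ∑ p, ∑ q, ρ p q * ∑ i : Fin n → β, ∏ t,
          N (Matrix.single (p t) (q t) 1) (i t) (i t) := by
    rw [Matrix.trace]
    simp only [Matrix.diag, tensorPow_apply]
    rw [Finset.sum_comm]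
    refine Finset.sum_congr rfl fun p _ => ?_
    rw [Finset.sum_comm]
    exact Finset.sum_congr rfl fun q _ => (Finset.mul_sum _ _ _).symm
  rw [this]
  simp_rw [key]
  simp [Matrix.trace]

lemma reindex_trace {γ δ : Type*} [Fintype γ] [Fintype δ] (e : γ ≃ δ)
    (M : Matrix γ γ ℂ) : (Matrix.reindex e e M).trace = M.trace := by
  simp only [Matrix.trace, Matrix.reindex_apply, Matrix.diag, Matrix.submatrix_apply]
  exact Fintype.sum_equiv e.symm _ _ fun b => rfl

lemma prodChannel_apply {β₁ β₂ : Type*} [Fintype β₁] [Fintype β₂]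
    (N : Matrix α α ℂ →ₗ[ℂ] Matrix (β₁ × β₂) (β₁ × β₂) ℂ) (n : ℕ)
    (ρ : Matrix (Fin n → α) (Fin n → α) ℂ) :
    prodChannel N n ρ = Matrix.reindex (Equiv.arrowProdEquivProdArrow (Fin n) (fun _ => β₁) (fun _ => β₂))
      (Equiv.arrowProdEquivProdArrow (Fin n) (fun _ => β₁) (fun _ => β₂)) (tensorPow N n ρ) := rfl

lemma prodChannel_psd {β₁ β₂ : Type*} [Fintype β₁] [Fintype β₂] [DecidableEq β₁]
    [DecidableEq β₂]
    {N : Matrix α α ℂ →ₗ[ℂ] Matrix (β₁ × β₂) (β₁ × β₂) ℂ} (hN : IsCPTP N) {n : ℕ}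
    {ρ : Matrix (Fin n → α) (Fin n → α) ℂ} (hρ : ρ.PosSemidef) :
    (prodChannel N n ρ).PosSemidef := by
  rw [prodChannel_apply]
  exact psd_reindex (tensorPow_psd hN hρ) _

lemma prodChannel_trace {β₁ β₂ : Type*} [Fintype β₁] [Fintype β₂] [DecidableEq β₁]
    [DecidableEq β₂]
    {N : Matrix α α ℂ →ₗ[ℂ] Matrix (β₁ × β₂) (β₁ × β₂) ℂ} (hN : IsCPTP N) {n : ℕ}
    (ρ : Matrix (Fin n → α) (Fin n → α) ℂ) :
    (prodChannel N n ρ).trace = ρ.trace := by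
  rw [prodChannel_apply, reindex_trace]
  exact tensorPow_trace hN ρ

end TPow

section Tilde

lemma psd_pureState {α : Type*} [Fintype α] (ψ : α → ℂ) : (pureState ψ).PosSemidef := by
  refine Matrix.PosSemidef.of_dotProduct_mulVec_nonneg ?_ ?_
  · ext i j
    simp [pureState, Matrix.conjTranspose_apply, mul_comm]
  · intro x
    have key : star x ⬝ᵥ (pureState ψ *ᵥ x)
        = star (∑ j, star (ψ j) * x j) * (∑ j, star (ψ j) * x j) := by
      simp only [dotProduct, Matrix.mulVec, pureState, Matrix.of_apply,
        star_sum, star_mul', star_star, Finset.mul_sum, Finset.sum_mul, Pi.star_apply]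
      rw [Finset.sum_comm]
      exact Finset.sum_congr rfl fun i _ => Finset.sum_congr rfl fun j _ => by ring
    rw [key]
    exact star_mul_self_nonneg _

lemma ent_norm_complex {s₁ s₂ : ℕ} (ent : Fin s₁ × Fin s₂ → ℂ)
    (hent : (∑ v, ‖ent v‖ ^ 2) = 1) : (∑ v, ent v * star (ent v)) = (1 : ℂ) := by
  have h : ∀ v, ent v * star (ent v) = ((‖ent v‖ ^ 2 : ℝ) : ℂ) := by
    intro v
    rw [show star (ent v) = (starRingEnd ℂ) (ent v) from rfl, Complex.mul_conj,
      Complex.normSq_eq_norm_sq]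
  simp_rw [h]
  rw [← Complex.ofReal_sum, hent]
  norm_num

variable {γ₁ γ₂ : Type*} [Fintype γ₁] [DecidableEq γ₁] [Fintype γ₂] [DecidableEq γ₂]
  {s₁ s₂ : ℕ}

/-- Receiver 1's POVM element, averaged over its share of the entangled state. -/
def tildeL (ent : Fin s₁ × Fin s₂ → ℂ) (Λ : Matrix (γ₁ × Fin s₁) (γ₁ × Fin s₁) ℂ) :
    Matrix γ₁ γ₁ ℂ :=
  Matrix.of fun i j => ∑ t, ∑ u, ∑ a, Λ (i, t) (j, u) * (ent (u, a) * star (ent (t, a)))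

/-- Receiver 2's POVM element, averaged over its share of the entangled state. -/
def tildeR (ent : Fin s₁ × Fin s₂ → ℂ) (Γ : Matrix (γ₂ × Fin s₂) (γ₂ × Fin s₂) ℂ) :
    Matrix γ₂ γ₂ ℂ :=
  Matrix.of fun i j => ∑ t, ∑ u, ∑ k, Γ (i, t) (j, u) * (ent (k, u) * star (ent (k, t)))

variable (ent : Fin s₁ × Fin s₂ → ℂ)

lemma tildeL_psd {Λ : Matrix (γ₁ × Fin s₁) (γ₁ × Fin s₁) ℂ} (hΛ : Λ.PosSemidef) :
    (tildeL ent Λ).PosSemidef := by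
  refine Matrix.PosSemidef.of_dotProduct_mulVec_nonneg ?_ ?_
  · ext i j
    simp only [Matrix.conjTranspose_apply, tildeL, Matrix.of_apply, star_sum, star_mul',
      star_star]
    rw [Finset.sum_comm]
    refine Finset.sum_congr rfl fun t _ => Finset.sum_congr rfl fun u _ =>
      Finset.sum_congr rfl fun a _ => ?_
    rw [hΛ.1.apply]
    ring
  · intro x
    have key : star x ⬝ᵥ (tildeL ent Λ *ᵥ x)
        = ∑ a, star (fun ju : γ₁ × Fin s₁ => x ju.1 * ent (ju.2, a)) ⬝ᵥ
            (Λ *ᵥ fun ju : γ₁ × Fin s₁ => x ju.1 * ent (ju.2, a)) := by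
      simp only [dotProduct, Matrix.mulVec, tildeL, Matrix.of_apply, Pi.star_apply,
        star_mul', Fintype.sum_prod_type, Finset.mul_sum, Finset.sum_mul]
      simp only [← Finset.sum_product', Finset.univ_product_univ]
      exact Fintype.sum_equiv
        ⟨fun z : γ₁ × γ₁ × Fin s₁ × Fin s₁ × Fin s₂ =>
            (z.2.2.2.2, z.1, z.2.2.1, z.2.1, z.2.2.2.1),
         fun w : Fin s₂ × γ₁ × Fin s₁ × γ₁ × Fin s₁ =>
            (w.2.1, w.2.2.2.1, w.2.2.1, w.2.2.2.2, w.1),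
         fun ⟨i, j, t, u, a⟩ => rfl, fun ⟨a, i, t, j, u⟩ => rfl⟩ _ _
        fun ⟨i, j, t, u, a⟩ => by simp only [Equiv.coe_fn_mk]; ring
    rw [key]
    exact Finset.sum_nonneg fun a _ => hΛ.dotProduct_mulVec_nonneg _

lemma tildeR_psd {Γ : Matrix (γ₂ × Fin s₂) (γ₂ × Fin s₂) ℂ} (hΓ : Γ.PosSemidef) :
    (tildeR ent Γ).PosSemidef := by
  refine Matrix.PosSemidef.of_dotProduct_mulVec_nonneg ?_ ?_
  · ext i j
    simp only [Matrix.conjTranspose_apply, tildeR, Matrix.of_apply, star_sum, star_mul',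
      star_star]
    rw [Finset.sum_comm]
    refine Finset.sum_congr rfl fun t _ => Finset.sum_congr rfl fun u _ =>
      Finset.sum_congr rfl fun k _ => ?_
    rw [hΓ.1.apply]
    ring
  · intro x
    have key : star x ⬝ᵥ (tildeR ent Γ *ᵥ x)
        = ∑ k, star (fun ju : γ₂ × Fin s₂ => x ju.1 * ent (k, ju.2)) ⬝ᵥ
            (Γ *ᵥ fun ju : γ₂ × Fin s₂ => x ju.1 * ent (k, ju.2)) := by
      simp only [dotProduct, Matrix.mulVec, tildeR, Matrix.of_apply, Pi.star_apply,
        star_mul', Fintype.sum_prod_type, Finset.mul_sum, Finset.sum_mul]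
      simp only [← Finset.sum_product', Finset.univ_product_univ]
      exact Fintype.sum_equiv
        ⟨fun z : γ₂ × γ₂ × Fin s₂ × Fin s₂ × Fin s₁ =>
            (z.2.2.2.2, z.1, z.2.2.1, z.2.1, z.2.2.2.1),
         fun w : Fin s₁ × γ₂ × Fin s₂ × γ₂ × Fin s₂ =>
            (w.2.1, w.2.2.2.1, w.2.2.1, w.2.2.2.2, w.1),
         fun ⟨i, j, t, u, k⟩ => rfl, fun ⟨k, i, t, j, u⟩ => rfl⟩ _ _
        fun ⟨i, j, t, u, k⟩ => by simp only [Equiv.coe_fn_mk]; ring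
    rw [key]
    exact Finset.sum_nonneg fun k _ => hΓ.dotProduct_mulVec_nonneg _

lemma tildeL_sum {I : Type*} (s : Finset I) (f : I → Matrix (γ₁ × Fin s₁) (γ₁ × Fin s₁) ℂ) :
    tildeL ent (∑ i ∈ s, f i) = ∑ i ∈ s, tildeL ent (f i) := by
  ext i j
  simp only [tildeL, Matrix.of_apply, Matrix.sum_apply, Finset.sum_mul]
  rw [show (∑ t, ∑ u, ∑ a, ∑ z ∈ s, f z (i, t) (j, u) * (ent (u, a) * star (ent (t, a))))
      = ∑ t, ∑ u, ∑ z ∈ s, ∑ a, f z (i, t) (j, u) * (ent (u, a) * star (ent (t, a)))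
    from Finset.sum_congr rfl fun t _ => Finset.sum_congr rfl fun u _ => Finset.sum_comm]
  rw [show (∑ t, ∑ u, ∑ z ∈ s, ∑ a, f z (i, t) (j, u) * (ent (u, a) * star (ent (t, a))))
      = ∑ t, ∑ z ∈ s, ∑ u, ∑ a, f z (i, t) (j, u) * (ent (u, a) * star (ent (t, a)))
    from Finset.sum_congr rfl fun t _ => Finset.sum_comm]
  exact Finset.sum_comm

lemma tildeR_sum {I : Type*} (s : Finset I) (f : I → Matrix (γ₂ × Fin s₂) (γ₂ × Fin s₂) ℂ) :
    tildeR ent (∑ i ∈ s, f i) = ∑ i ∈ s, tildeR ent (f i) := by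
  ext i j
  simp only [tildeR, Matrix.of_apply, Matrix.sum_apply, Finset.sum_mul]
  rw [show (∑ t, ∑ u, ∑ a, ∑ z ∈ s, f z (i, t) (j, u) * (ent (a, u) * star (ent (a, t))))
      = ∑ t, ∑ u, ∑ z ∈ s, ∑ a, f z (i, t) (j, u) * (ent (a, u) * star (ent (a, t)))
    from Finset.sum_congr rfl fun t _ => Finset.sum_congr rfl fun u _ => Finset.sum_comm]
  rw [show (∑ t, ∑ u, ∑ z ∈ s, ∑ a, f z (i, t) (j, u) * (ent (a, u) * star (ent (a, t))))
      = ∑ t, ∑ z ∈ s, ∑ u, ∑ a, f z (i, t) (j, u) * (ent (a, u) * star (ent (a, t)))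
    from Finset.sum_congr rfl fun t _ => Finset.sum_comm]
  exact Finset.sum_comm

lemma tildeL_one (hent : (∑ v, ‖ent v‖ ^ 2) = 1) :
    tildeL ent (1 : Matrix (γ₁ × Fin s₁) (γ₁ × Fin s₁) ℂ) = 1 := by
  have h := ent_norm_complex ent hent
  rw [Fintype.sum_prod_type] at h
  ext i j
  simp only [tildeL, Matrix.of_apply, Matrix.one_apply, Prod.mk.injEq, ite_mul, zero_mul,
    one_mul, ite_and]
  rcases eq_or_ne i j with rfl | hij
  · simp only [if_pos rfl]
    calc (∑ t, ∑ u, ∑ a : Fin s₂, if t = u then ent (u, a) * star (ent (t, a)) else 0)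
        = ∑ t, ∑ a, ent (t, a) * star (ent (t, a)) := by
          refine Finset.sum_congr rfl fun t _ => ?_
          rw [Finset.sum_comm]
          refine Finset.sum_congr rfl fun a _ => ?_
          simp
      _ = 1 := h
  · simp [hij]

lemma tildeR_one (hent : (∑ v, ‖ent v‖ ^ 2) = 1) :
    tildeR ent (1 : Matrix (γ₂ × Fin s₂) (γ₂ × Fin s₂) ℂ) = 1 := by
  have h := ent_norm_complex ent hent
  rw [Fintype.sum_prod_type] at h
  ext i j
  simp only [tildeR, Matrix.of_apply, Matrix.one_apply, Prod.mk.injEq, ite_mul, zero_mul,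
    one_mul, ite_and]
  rcases eq_or_ne i j with rfl | hij
  · simp only [if_pos rfl]
    calc (∑ t, ∑ u, ∑ a : Fin s₁, if t = u then ent (a, u) * star (ent (a, t)) else 0)
        = ∑ t, ∑ a, ent (a, t) * star (ent (a, t)) := by
          refine Finset.sum_congr rfl fun t _ => ?_
          rw [Finset.sum_comm]
          refine Finset.sum_congr rfl fun a _ => ?_
          simp
      _ = 1 := by rw [Finset.sum_comm]; exact h
  · simp [hij]

end Tilde

section Identities

variable {γ₁ γ₂ : Type*} [Fintype γ₁] [DecidableEq γ₁] [Fintype γ₂] [DecidableEq γ₂]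
  {s₁ s₂ : ℕ}

lemma marginalL (ent : Fin s₁ × Fin s₂ → ℂ)
    (Λ : Matrix (γ₁ × Fin s₁) (γ₁ × Fin s₁) ℂ) (ρ : Matrix (γ₁ × γ₂) (γ₁ × γ₂) ℂ) :
    ((Λ ⊗ₖ (1 : Matrix (γ₂ × Fin s₂) (γ₂ × Fin s₂) ℂ)) *
      Matrix.reindex (Equiv.prodProdProdComm γ₁ γ₂ (Fin s₁) (Fin s₂))
        (Equiv.prodProdProdComm γ₁ γ₂ (Fin s₁) (Fin s₂))
        (ρ ⊗ₖ pureState ent)).trace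
    = ((tildeL ent Λ ⊗ₖ (1 : Matrix γ₂ γ₂ ℂ)) * ρ).trace := by
  simp only [Matrix.trace, Matrix.diag, Matrix.mul_apply, Matrix.kroneckerMap_apply,
    Matrix.reindex_apply, Matrix.submatrix_apply, Equiv.prodProdProdComm_symm,
    Equiv.prodProdProdComm_apply, pureState, tildeL, Matrix.of_apply, Matrix.one_apply,
    Fintype.sum_prod_type, mul_ite, mul_zero, mul_one, ite_mul, zero_mul,
    Finset.sum_ite_eq, Finset.sum_ite_eq', Finset.mem_univ, if_true,
    Finset.sum_mul, Finset.mul_sum]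
  simp only [← Finset.sum_product', Finset.univ_product_univ]
  exact Fintype.sum_equiv
    ⟨fun z : γ₁ × Fin s₁ × γ₂ × Fin s₂ × γ₁ × Fin s₁ =>
        (z.1, z.2.2.1, z.2.2.2.2.1, z.2.1, z.2.2.2.2.2, z.2.2.2.1),
     fun w : γ₁ × γ₂ × γ₁ × Fin s₁ × Fin s₁ × Fin s₂ =>
        (w.1, w.2.2.2.1, w.2.1, w.2.2.2.2.2, w.2.2.1, w.2.2.2.2.1),
     fun ⟨i, t, b, s, j, u⟩ => rfl, fun ⟨i, b, j, t, u, s⟩ => rfl⟩ _ _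
    fun ⟨i, t, b, s, j, u⟩ => by simp only [Equiv.coe_fn_mk]; ring

lemma marginalR (ent : Fin s₁ × Fin s₂ → ℂ)
    (Γ : Matrix (γ₂ × Fin s₂) (γ₂ × Fin s₂) ℂ) (ρ : Matrix (γ₁ × γ₂) (γ₁ × γ₂) ℂ) :
    (((1 : Matrix (γ₁ × Fin s₁) (γ₁ × Fin s₁) ℂ) ⊗ₖ Γ) *
      Matrix.reindex (Equiv.prodProdProdComm γ₁ γ₂ (Fin s₁) (Fin s₂))
        (Equiv.prodProdProdComm γ₁ γ₂ (Fin s₁) (Fin s₂))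
        (ρ ⊗ₖ pureState ent)).trace
    = (((1 : Matrix γ₁ γ₁ ℂ) ⊗ₖ tildeR ent Γ) * ρ).trace := by
  simp only [Matrix.trace, Matrix.diag, Matrix.mul_apply, Matrix.kroneckerMap_apply,
    Matrix.reindex_apply, Matrix.submatrix_apply, Equiv.prodProdProdComm_symm,
    Equiv.prodProdProdComm_apply, pureState, tildeR, Matrix.of_apply, Matrix.one_apply,
    Fintype.sum_prod_type, mul_ite, mul_zero, mul_one, ite_mul, zero_mul,
    Finset.sum_mul, Finset.mul_sum, Prod.mk.injEq, ite_and]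
  conv_lhs => enter [2, x, 2, x1, 2, x2, 2, x3, 2, x4]; rw [Finset.sum_comm]
  conv_lhs => enter [2, x, 2, x1, 2, x2, 2, x3]; rw [Finset.sum_comm]
  conv_lhs => enter [2, x, 2, x1, 2, x2, 2, x3, 2, x6, 2, x4]; rw [Finset.sum_comm]
  conv_lhs => enter [2, x, 2, x1, 2, x2, 2, x3, 2, x6]; rw [Finset.sum_comm]
  conv_rhs => enter [2, x, 2, x1]; rw [Finset.sum_comm]
  conv_rhs => enter [2, x, 2, x1, 2, x3]; rw [Finset.sum_comm]
  conv_rhs => enter [2, x, 2, x1, 2, x3, 2, x4]; rw [Finset.sum_comm]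
  conv_rhs => enter [2, x, 2, x1, 2, x3, 2, x4, 2, x5]; rw [Finset.sum_comm]
  simp only [Finset.sum_ite_irrel, Finset.sum_const_zero, Finset.sum_ite_eq,
    Finset.sum_ite_eq', Finset.mem_univ, if_true, one_mul]
  simp only [← Finset.sum_product', Finset.univ_product_univ]
  exact Fintype.sum_equiv
    ⟨fun z : γ₁ × Fin s₁ × γ₂ × Fin s₂ × γ₂ × Fin s₂ =>
        (z.1, z.2.2.1, z.2.2.2.2.1, z.2.2.2.1, z.2.2.2.2.2, z.2.1),
     fun w : γ₁ × γ₂ × γ₂ × Fin s₂ × Fin s₂ × Fin s₁ =>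
        (w.1, w.2.2.2.2.2, w.2.1, w.2.2.2.1, w.2.2.1, w.2.2.2.2.1),
     fun ⟨i, k, b, s, c, d⟩ => rfl, fun ⟨i, b, c, s, d, k⟩ => rfl⟩ _ _
    fun ⟨i, k, b, s, c, d⟩ => by simp only [Equiv.coe_fn_mk]; ring

lemma plain_master (A : Matrix γ₁ γ₁ ℂ) (B : Matrix γ₂ γ₂ ℂ)
    (ρ : Matrix (γ₁ × γ₂) (γ₁ × γ₂) ℂ) :
    ((A.submatrix Prod.fst Prod.fst ⊗ₖ B.submatrix Prod.fst Prod.fst) *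
      Matrix.reindex (Equiv.prodProdProdComm γ₁ γ₂ (Fin 1) (Fin 1))
        (Equiv.prodProdProdComm γ₁ γ₂ (Fin 1) (Fin 1))
        (ρ ⊗ₖ pureState (fun _ : Fin 1 × Fin 1 => (1 : ℂ)))).trace
    = ((A ⊗ₖ B) * ρ).trace := by
  simp only [Matrix.trace, Matrix.diag, Matrix.mul_apply, Matrix.kroneckerMap_apply,
    Matrix.reindex_apply, Matrix.submatrix_apply, Equiv.prodProdProdComm_symm,
    Equiv.prodProdProdComm_apply, pureState, Matrix.of_apply,
    Fintype.sum_prod_type, mul_one, one_mul, star_one, Finset.sum_mul, Finset.mul_sum,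
    Fin.sum_univ_one]

lemma kron_split_right (A : Matrix γ₁ γ₁ ℂ) (B : Matrix γ₂ γ₂ ℂ) :
    A ⊗ₖ (1 : Matrix γ₂ γ₂ ℂ) = A ⊗ₖ B + A ⊗ₖ (1 - B) := by
  ext ⟨i, t⟩ ⟨j, u⟩
  simp only [Matrix.kroneckerMap_apply, Matrix.add_apply, Matrix.sub_apply]
  ring

lemma kron_split_left (A : Matrix γ₁ γ₁ ℂ) (B : Matrix γ₂ γ₂ ℂ) :
    (1 : Matrix γ₁ γ₁ ℂ) ⊗ₖ B = A ⊗ₖ B + (1 - A) ⊗ₖ B := by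
  ext ⟨i, t⟩ ⟨j, u⟩
  simp only [Matrix.kroneckerMap_apply, Matrix.add_apply, Matrix.sub_apply]
  ring

lemma kron_one_sub_expand (A : Matrix γ₁ γ₁ ℂ) (B : Matrix γ₂ γ₂ ℂ) :
    ((1 - A) ⊗ₖ (1 - B))
      = (1 : Matrix (γ₁ × γ₂) (γ₁ × γ₂) ℂ) - A ⊗ₖ (1 : Matrix γ₂ γ₂ ℂ)
        - (1 : Matrix γ₁ γ₁ ℂ) ⊗ₖ B + A ⊗ₖ B := by
  have h := Matrix.one_kronecker_one (α := ℂ) (m := γ₁) (n := γ₂)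
  ext ⟨i, t⟩ ⟨j, u⟩
  have h1 : (1 : Matrix (γ₁ × γ₂) (γ₁ × γ₂) ℂ) (i, t) (j, u)
      = (1 : Matrix γ₁ γ₁ ℂ) i j * (1 : Matrix γ₂ γ₂ ℂ) t u := by
    rw [← h, Matrix.kroneckerMap_apply]
  simp only [Matrix.kroneckerMap_apply, Matrix.add_apply, Matrix.sub_apply, h1]
  ring

lemma one_sub_psd_of_sum {I α : Type*} [Fintype I] [DecidableEq I] [Fintype α]
    [DecidableEq α] (g : I → Matrix α α ℂ) (hg : ∀ i, (g i).PosSemidef)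
    (hsum : (∑ i, g i) = 1) (i₀ : I) : ((1 : Matrix α α ℂ) - g i₀).PosSemidef := by
  have key : (1 : Matrix α α ℂ) - g i₀ = ∑ i ∈ Finset.univ.erase i₀, g i := by
    rw [← hsum, ← Finset.sum_erase_add Finset.univ g (Finset.mem_univ i₀)]
    exact add_sub_cancel_right _ _
  rw [key]
  exact psd_sum _ _ fun i _ => hg i

lemma tildeL_sub (ent : Fin s₁ × Fin s₂ → ℂ)
    (A B : Matrix (γ₁ × Fin s₁) (γ₁ × Fin s₁) ℂ) :
    tildeL ent (A - B) = tildeL ent A - tildeL ent B := by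
  ext i j
  simp [tildeL, Matrix.sub_apply, sub_mul, Finset.sum_sub_distrib]

lemma tildeR_sub (ent : Fin s₁ × Fin s₂ → ℂ)
    (A B : Matrix (γ₂ × Fin s₂) (γ₂ × Fin s₂) ℂ) :
    tildeR ent (A - B) = tildeR ent A - tildeR ent B := by
  ext i j
  simp [tildeR, Matrix.sub_apply, sub_mul, Finset.sum_sub_distrib]

end Identities

section Construction

variable {ι β₁ β₂ : Type*} [Fintype ι] [DecidableEq ι] [Fintype β₁] [DecidableEq β₁]
  [Fintype β₂] [DecidableEq β₂]

/-- The unassisted code obtained from an entanglement-assisted code by feeding each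
decoder the reduced state of its share of the entangled state. -/
noncomputable def plainCode {n M₀ M₁ s₁ s₂ : ℕ} (c : EACode ι β₁ β₂ n M₀ M₁ s₁ s₂) :
    EACode ι β₁ β₂ n M₀ M₁ 1 1 where
  enc := c.enc
  enc_density := c.enc_density
  ent := fun _ => 1
  ent_norm := by simp
  dec1 := fun m₀ m₁ => (tildeL c.ent (c.dec1 m₀ m₁)).submatrix Prod.fst Prod.fst
  dec1_pos := fun m₀ m₁ => (tildeL_psd c.ent (c.dec1_pos m₀ m₁)).submatrix _
  dec1_sum := by
    have key : (∑ m₀, ∑ m₁, tildeL c.ent (c.dec1 m₀ m₁)) = 1 :=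
      calc (∑ m₀, ∑ m₁, tildeL c.ent (c.dec1 m₀ m₁))
          = ∑ m₀, tildeL c.ent (∑ m₁, c.dec1 m₀ m₁) :=
            Finset.sum_congr rfl fun m₀ _ => (tildeL_sum c.ent _ _).symm
        _ = tildeL c.ent (∑ m₀, ∑ m₁, c.dec1 m₀ m₁) := (tildeL_sum c.ent _ _).symm
        _ = 1 := by rw [c.dec1_sum, tildeL_one c.ent c.ent_norm]
    have hsub : (∑ m₀, ∑ m₁, (tildeL c.ent (c.dec1 m₀ m₁)).submatrix
        (Prod.fst : (Fin n → β₁) × Fin 1 → (Fin n → β₁))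
        (Prod.fst : (Fin n → β₁) × Fin 1 → (Fin n → β₁)))
        = ((∑ m₀, ∑ m₁, tildeL c.ent (c.dec1 m₀ m₁)).submatrix
            (Prod.fst : (Fin n → β₁) × Fin 1 → (Fin n → β₁))
            (Prod.fst : (Fin n → β₁) × Fin 1 → (Fin n → β₁))) := by
      ext x y
      simp [Matrix.sum_apply]
    rw [hsub, key]
    ext ⟨i, t⟩ ⟨j, u⟩
    simp [Matrix.one_apply, Matrix.submatrix_apply, Prod.ext_iff, Subsingleton.elim t u]
  dec2 := fun m₀ => (tildeR c.ent (c.dec2 m₀)).submatrix Prod.fst Prod.fst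
  dec2_pos := fun m₀ => (tildeR_psd c.ent (c.dec2_pos m₀)).submatrix _
  dec2_sum := by
    have key : (∑ m₀, tildeR c.ent (c.dec2 m₀)) = 1 :=
      calc (∑ m₀, tildeR c.ent (c.dec2 m₀))
          = tildeR c.ent (∑ m₀, c.dec2 m₀) := (tildeR_sum c.ent _ _).symm
        _ = 1 := by rw [c.dec2_sum, tildeR_one c.ent c.ent_norm]
    have hsub : (∑ m₀, (tildeR c.ent (c.dec2 m₀)).submatrix
        (Prod.fst : (Fin n → β₂) × Fin 1 → (Fin n → β₂))
        (Prod.fst : (Fin n → β₂) × Fin 1 → (Fin n → β₂)))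
        = ((∑ m₀, tildeR c.ent (c.dec2 m₀)).submatrix
            (Prod.fst : (Fin n → β₂) × Fin 1 → (Fin n → β₂))
            (Prod.fst : (Fin n → β₂) × Fin 1 → (Fin n → β₂))) := by
      ext x y
      simp [Matrix.sum_apply]
    rw [hsub, key]
    ext ⟨i, t⟩ ⟨j, u⟩
    simp [Matrix.one_apply, Matrix.submatrix_apply, Prod.ext_iff, Subsingleton.elim t u]

lemma plainCode_err_le {n M₀ M₁ s₁ s₂ : ℕ}
    (N : Matrix ι ι ℂ →ₗ[ℂ] Matrix (β₁ × β₂) (β₁ × β₂) ℂ) (hN : IsCPTP N)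
    (c : EACode ι β₁ β₂ n M₀ M₁ s₁ s₂) (m₀ : Fin M₀) (m₁ : Fin M₁) :
    EACode.err N (plainCode c) m₀ m₁ ≤ 2 * EACode.err N c m₀ m₁ := by
  let γ₁ := Fin n → β₁
  let γ₂ := Fin n → β₂
  let ρo : Matrix (γ₁ × γ₂) (γ₁ × γ₂) ℂ := prodChannel N n (c.enc m₀ m₁)
  let Λ := c.dec1 m₀ m₁
  let Γ := c.dec2 m₀
  let At := tildeL c.ent Λ
  let Bt := tildeR c.ent Γ
  let X := Matrix.reindex (Equiv.prodProdProdComm γ₁ γ₂ (Fin s₁) (Fin s₂))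
    (Equiv.prodProdProdComm γ₁ γ₂ (Fin s₁) (Fin s₂)) (ρo ⊗ₖ pureState c.ent)
  have hρps : ρo.PosSemidef := prodChannel_psd hN (c.enc_density m₀ m₁).1
  have hρtr : ρo.trace = 1 := by
    rw [show ρo.trace = (prodChannel N n (c.enc m₀ m₁)).trace from rfl,
      prodChannel_trace hN]
    exact (c.enc_density m₀ m₁).2
  have hXps : X.PosSemidef := psd_reindex (psd_kron hρps (psd_pureState c.ent)) _
  have hΛ : Λ.PosSemidef := c.dec1_pos m₀ m₁
  have hΓ : Γ.PosSemidef := c.dec2_pos m₀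
  have h1Λ : ((1 : Matrix (γ₁ × Fin s₁) (γ₁ × Fin s₁) ℂ) - Λ).PosSemidef := by
    refine one_sub_psd_of_sum (fun z : Fin M₀ × Fin M₁ => c.dec1 z.1 z.2)
      (fun z => c.dec1_pos z.1 z.2) ?_ (m₀, m₁)
    rw [Fintype.sum_prod_type]
    exact c.dec1_sum
  have h1Γ : ((1 : Matrix (γ₂ × Fin s₂) (γ₂ × Fin s₂) ℂ) - Γ).PosSemidef :=
    one_sub_psd_of_sum c.dec2 c.dec2_pos c.dec2_sum m₀
  have hAt : At.PosSemidef := tildeL_psd c.ent hΛ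
  have hBt : Bt.PosSemidef := tildeR_psd c.ent hΓ
  have h1At : ((1 : Matrix γ₁ γ₁ ℂ) - At).PosSemidef := by
    have h : (1 : Matrix γ₁ γ₁ ℂ) - At = tildeL c.ent (1 - Λ) := by
      rw [tildeL_sub, tildeL_one c.ent c.ent_norm]
    rw [h]
    exact tildeL_psd c.ent h1Λ
  have h1Bt : ((1 : Matrix γ₂ γ₂ ℂ) - Bt).PosSemidef := by
    have h : (1 : Matrix γ₂ γ₂ ℂ) - Bt = tildeR c.ent (1 - Γ) := by
      rw [tildeR_sub, tildeR_one c.ent c.ent_norm]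
    rw [h]
    exact tildeR_psd c.ent h1Γ
  -- the entangled success probability is at most each local marginal
  have hSa : ((Λ ⊗ₖ Γ) * X).trace.re
      ≤ ((Λ ⊗ₖ (1 : Matrix (γ₂ × Fin s₂) (γ₂ × Fin s₂) ℂ)) * X).trace.re := by
    have hsplit : ((Λ ⊗ₖ (1 : Matrix (γ₂ × Fin s₂) (γ₂ × Fin s₂) ℂ)) * X).trace
        = ((Λ ⊗ₖ Γ) * X).trace + ((Λ ⊗ₖ (1 - Γ)) * X).trace := by
      rw [kron_split_right Λ Γ, Matrix.add_mul, Matrix.trace_add]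
    have hpos := trace_mul_psd_nonneg (psd_kron hΛ h1Γ) hXps
    rw [hsplit, Complex.add_re]
    linarith
  have hSb : ((Λ ⊗ₖ Γ) * X).trace.re
      ≤ (((1 : Matrix (γ₁ × Fin s₁) (γ₁ × Fin s₁) ℂ) ⊗ₖ Γ) * X).trace.re := by
    have hsplit : (((1 : Matrix (γ₁ × Fin s₁) (γ₁ × Fin s₁) ℂ) ⊗ₖ Γ) * X).trace
        = ((Λ ⊗ₖ Γ) * X).trace + (((1 - Λ) ⊗ₖ Γ) * X).trace := by
      rw [kron_split_left Λ Γ, Matrix.add_mul, Matrix.trace_add]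
    have hpos := trace_mul_psd_nonneg (psd_kron h1Λ hΓ) hXps
    rw [hsplit, Complex.add_re]
    linarith
  -- marginals are reproduced by the averaged measurements
  have ha : ((Λ ⊗ₖ (1 : Matrix (γ₂ × Fin s₂) (γ₂ × Fin s₂) ℂ)) * X).trace
      = ((At ⊗ₖ (1 : Matrix γ₂ γ₂ ℂ)) * ρo).trace := marginalL c.ent Λ ρo
  have hb : (((1 : Matrix (γ₁ × Fin s₁) (γ₁ × Fin s₁) ℂ) ⊗ₖ Γ) * X).trace
      = (((1 : Matrix γ₁ γ₁ ℂ) ⊗ₖ Bt) * ρo).trace := marginalR c.ent Γ ρo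
  -- union bound for the averaged measurements
  have hjoint : ((At ⊗ₖ (1 : Matrix γ₂ γ₂ ℂ)) * ρo).trace.re
      + (((1 : Matrix γ₁ γ₁ ℂ) ⊗ₖ Bt) * ρo).trace.re - 1
      ≤ ((At ⊗ₖ Bt) * ρo).trace.re := by
    have heq : (((1 - At) ⊗ₖ (1 - Bt)) * ρo).trace
        = ρo.trace - ((At ⊗ₖ (1 : Matrix γ₂ γ₂ ℂ)) * ρo).trace
          - (((1 : Matrix γ₁ γ₁ ℂ) ⊗ₖ Bt) * ρo).trace + ((At ⊗ₖ Bt) * ρo).trace := by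
      rw [kron_one_sub_expand At Bt, Matrix.add_mul, Matrix.sub_mul, Matrix.sub_mul,
        Matrix.one_mul, Matrix.trace_add, Matrix.trace_sub, Matrix.trace_sub]
    have hpos := trace_mul_psd_nonneg (psd_kron h1At h1Bt) hρps
    rw [heq] at hpos
    have h1 : ρo.trace.re = 1 := by rw [hρtr]; exact Complex.one_re
    simp only [Complex.add_re, Complex.sub_re, h1] at hpos
    linarith
  -- rewrite both error probabilities
  have herr : EACode.err N c m₀ m₁ = 1 - ((Λ ⊗ₖ Γ) * X).trace.re := rfl
  have herr' : EACode.err N (plainCode c) m₀ m₁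
      = 1 - ((At ⊗ₖ Bt) * ρo).trace.re := by
    have hmaster := plain_master At Bt ρo
    have hshow : EACode.err N (plainCode c) m₀ m₁
        = 1 - ((At.submatrix Prod.fst Prod.fst ⊗ₖ Bt.submatrix Prod.fst Prod.fst) *
            Matrix.reindex (Equiv.prodProdProdComm γ₁ γ₂ (Fin 1) (Fin 1))
              (Equiv.prodProdProdComm γ₁ γ₂ (Fin 1) (Fin 1))
              (ρo ⊗ₖ pureState (fun _ : Fin 1 × Fin 1 => (1 : ℂ)))).trace.re := rfl
    rw [hshow, hmaster]
  rw [herr, herr']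
  have ha' := congrArg Complex.re ha
  have hb' := congrArg Complex.re hb
  linarith
end Construction

/-- Entanglement shared between the two decoders does not increase the
classical capacity region of a quantum broadcast channel with degraded message sets:
the capacity region with entangled decoders equals the capacity region without any
shared entanglement. -/
theorem entangled_decoders_no_gain {d d₁ d₂ : ℕ}
    (N : Matrix (Fin d) (Fin d) ℂ →ₗ[ℂ] Matrix (Fin d₁ × Fin d₂) (Fin d₁ × Fin d₂) ℂ)
    (hN : IsCPTP N) :
    {r : ℝ × ℝ | eaAchievable N r} = {r : ℝ × ℝ | plainAchievable N r} := by
  ext r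
  simp only [Set.mem_setOf_eq]
  constructor
  · intro h ε hε
    obtain ⟨n₀, H⟩ := h (ε / 2) (by linarith)
    refine ⟨n₀, fun n hn => ?_⟩
    obtain ⟨M₀, M₁, s₁, s₂, c, h₀, h₁, herr⟩ := H n hn
    refine ⟨M₀, M₁, plainCode c, h₀, h₁, fun m₀ m₁ => ?_⟩
    calc EACode.err N (plainCode c) m₀ m₁
        ≤ 2 * EACode.err N c m₀ m₁ := plainCode_err_le N hN c m₀ m₁
      _ ≤ 2 * (ε / 2) := by have := herr m₀ m₁; linarith
      _ = ε := by ring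
  · intro h ε hε
    obtain ⟨n₀, H⟩ := h ε hε
    refine ⟨n₀, fun n hn => ?_⟩
    obtain ⟨M₀, M₁, c, h₀, h₁, herr⟩ := H n hn
    exact ⟨M₀, M₁, 1, 1, c, h₀, h₁, herr⟩

end QBC
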